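/- arXiv:math/0202047 — 3 statements merged into one kernel-verified Lean document; each statement's English description precedes it below -/
import Mathlib

section
/- For any nonzero integers p and q, the subgroup of BS(p,q) generated by x is infinite cyclic (the element x has infinite order). -/
/-- The Baumslag–Solitar group `BS(p,q) = ⟨x, t | t x^p t⁻¹ = x^q⟩`.
Generators: `false ↦ x`, `true ↦ t`. -/
def BaumslagSolitar (p q : ℤ) : Type :=
  PresentedGroup ({FreeGroup.of true * (FreeGroup.of false) ^ p * (FreeGroup.of true)⁻¹ *
    ((FreeGroup.of false) ^ q)⁻¹} : Set (FreeGroup Bool))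

instance (p q : ℤ) : Group (BaumslagSolitar p q) :=
  inferInstanceAs (Group (PresentedGroup _))

/-- The generator `x` of `BS(p,q)`. -/
def BaumslagSolitar.x (p q : ℤ) : BaumslagSolitar p q := PresentedGroup.of false

/-- The map `BS(p,q) → Perm ℚ` sending `x` to translation by `1` and `t` to scaling by `q/p`. -/
noncomputable def bsMap (p q : ℤ) (hp : p ≠ 0) (hq : q ≠ 0) :
    BaumslagSolitar p q →* Equiv.Perm ℚ :=
  PresentedGroup.toGroup (f := fun b => if b then
      Equiv.mulLeft₀ ((q : ℚ)/p) (div_ne_zero (Int.cast_ne_zero.2 hq) (Int.cast_ne_zero.2 hp))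
    else Equiv.addLeft 1) (by
    rintro r rfl
    simp only [map_mul, map_inv, map_zpow, FreeGroup.lift_apply_of, if_true, if_false]
    rw [mul_inv_eq_one, mul_inv_eq_iff_eq_mul]
    ext a
    have hp' : (p : ℚ) ≠ 0 := Int.cast_ne_zero.2 hp
    simp [Equiv.zsmul_addLeft, Equiv.Perm.mul_apply, Equiv.mulLeft₀, mul_add,
      div_mul_cancel₀ _ hp'])

/-- For nonzero `p, q`, the element `x` has infinite order, i.e. the subgroup it
generates is infinite cyclic. -/
theorem baumslagSolitar_x_infinite_order (p q : ℤ) (hp : p ≠ 0) (hq : q ≠ 0) :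
    ¬ IsOfFinOrder (BaumslagSolitar.x p q) ∧
    (Subgroup.zpowers (BaumslagSolitar.x p q) : Set (BaumslagSolitar p q)).Infinite := by
  have hx : bsMap p q hp hq (BaumslagSolitar.x p q) = Equiv.addLeft (1 : ℚ) :=
    PresentedGroup.toGroup.of _
  have hfin : ¬ IsOfFinOrder (BaumslagSolitar.x p q) := by
    intro h
    obtain ⟨n, hn, hpow⟩ := isOfFinOrder_iff_pow_eq_one.1 h
    have : (Equiv.addLeft (1 : ℚ)) ^ n = 1 := by
      rw [← hx, ← map_pow, hpow, map_one]
    have h0 : ((n : ℚ)) = 0 := by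
      have := congrArg (fun e : Equiv.Perm ℚ => e 0) this
      simpa [Equiv.nsmul_addLeft] using this
    exact absurd (Nat.cast_eq_zero.1 h0) hn.ne'
  exact ⟨hfin, infinite_zpowers.2 hfin⟩
end

section
/- If a topological group G has a metrically proper affine isometric action on a Hilbert space H, then the function g ↦ exp(−‖g·0‖²) is a positive definite function on G vanishing at infinity (i.e., a C₀ positive definite function). -/
open Filter

section Aux

open Finset Nat Matrix

/-- Quadratic form of a Hadamard power of `Bᵀ * B` is nonnegative. -/
lemma aux_quad_pow_nonneg {n : ℕ} (B : Matrix (Fin n) (Fin n) ℝ) (k : ℕ) (c : Fin n → ℝ) :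
    0 ≤ ∑ i, ∑ j, c i * c j * ((Bᴴ * B) i j) ^ k := by
  have h : ∀ i j : Fin n, ((Bᴴ * B) i j) ^ k =
      ∑ p ∈ Fintype.piFinset (fun _ : Fin k => (Finset.univ : Finset (Fin n))),
        (∏ m, B (p m) i) * (∏ m, B (p m) j) := by
    intro i j
    have : (Bᴴ * B) i j = ∑ l, B l i * B l j := by
      simp [Matrix.mul_apply, Matrix.conjTranspose_apply]
    rw [this, Finset.sum_pow']
    exact Finset.sum_congr rfl fun p _ => by rw [Finset.prod_mul_distrib]
  have key : ∑ i, ∑ j, c i * c j * ((Bᴴ * B) i j) ^ k =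
      ∑ p ∈ Fintype.piFinset (fun _ : Fin k => (Finset.univ : Finset (Fin n))),
        (∑ i, c i * ∏ m, B (p m) i) ^ 2 := by
    calc ∑ i, ∑ j, c i * c j * ((Bᴴ * B) i j) ^ k
        = ∑ i, ∑ p ∈ Fintype.piFinset (fun _ : Fin k => (Finset.univ : Finset (Fin n))),
            ∑ j, (c i * ∏ m, B (p m) i) * (c j * ∏ m, B (p m) j) := by
          refine Finset.sum_congr rfl fun i _ => ?_
          have hj : ∀ j : Fin n, c i * c j * ((Bᴴ * B) i j) ^ k =
              ∑ p ∈ Fintype.piFinset (fun _ : Fin k => (Finset.univ : Finset (Fin n))),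
                (c i * ∏ m, B (p m) i) * (c j * ∏ m, B (p m) j) := fun j => by
            rw [h, Finset.mul_sum]
            exact Finset.sum_congr rfl fun p _ => by ring
          rw [Finset.sum_congr rfl fun j _ => hj j, Finset.sum_comm]
      _ = ∑ p ∈ Fintype.piFinset (fun _ : Fin k => (Finset.univ : Finset (Fin n))),
            ∑ i, ∑ j, (c i * ∏ m, B (p m) i) * (c j * ∏ m, B (p m) j) := Finset.sum_comm
      _ = ∑ p ∈ Fintype.piFinset (fun _ : Fin k => (Finset.univ : Finset (Fin n))),
            (∑ i, c i * ∏ m, B (p m) i) ^ 2 := by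
          refine Finset.sum_congr rfl fun p _ => ?_
          rw [sq, Finset.sum_mul_sum]
  rw [key]
  exact Finset.sum_nonneg fun p _ => sq_nonneg _

/-- Quadratic form of a Hadamard power of a positive semidefinite matrix. -/
lemma aux_quad_pow_nonneg' {n : ℕ} {M : Matrix (Fin n) (Fin n) ℝ} (hM : M.PosSemidef)
    (k : ℕ) (c : Fin n → ℝ) :
    0 ≤ ∑ i, ∑ j, c i * c j * (M i j) ^ k := by
  open scoped MatrixOrder in
  obtain ⟨B, rfl⟩ := CStarAlgebra.nonneg_iff_eq_star_mul_self.mp hM.nonneg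
  exact aux_quad_pow_nonneg B k c

/-- Quadratic form of the entrywise exponential of a positive semidefinite matrix. -/
lemma aux_quad_exp_nonneg {n : ℕ} {M : Matrix (Fin n) (Fin n) ℝ} (hM : M.PosSemidef)
    (c : Fin n → ℝ) :
    0 ≤ ∑ i, ∑ j, c i * c j * Real.exp (M i j) := by
  have hexp : ∀ i j : Fin n, Real.exp (M i j) = ∑' k : ℕ, (M i j) ^ k / k ! := by
    intro i j
    rw [Real.exp_eq_exp_ℝ, NormedSpace.exp_eq_tsum_div]
  have hsum1 : ∀ i j : Fin n, Summable (fun k : ℕ => c i * c j * ((M i j) ^ k / k !)) :=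
    fun i j => (Real.summable_pow_div_factorial (M i j)).mul_left _
  have hswap : ∑ i, ∑ j, c i * c j * Real.exp (M i j) =
      ∑' k : ℕ, ∑ i, ∑ j, c i * c j * ((M i j) ^ k / k !) := by
    rw [Summable.tsum_finsetSum (fun i _ => summable_sum (fun j _ => hsum1 i j))]
    refine Finset.sum_congr rfl fun i _ => ?_
    rw [Summable.tsum_finsetSum (fun j _ => hsum1 i j)]
    refine Finset.sum_congr rfl fun j _ => ?_
    rw [hexp, tsum_mul_left]
  rw [hswap]
  refine tsum_nonneg fun k => ?_
  have : ∑ i, ∑ j, c i * c j * ((M i j) ^ k / k !) =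
      (∑ i, ∑ j, c i * c j * (M i j) ^ k) * ((k ! : ℝ))⁻¹ := by
    rw [Finset.sum_mul]
    refine Finset.sum_congr rfl fun i _ => ?_
    rw [Finset.sum_mul]
    exact Finset.sum_congr rfl fun j _ => by rw [div_eq_mul_inv]; ring
  rw [this]
  exact mul_nonneg (aux_quad_pow_nonneg' hM k c) (by positivity)

/-- The Gram matrix of a family of vectors is positive semidefinite. -/
lemma aux_gram_posSemidef {H : Type*} [NormedAddCommGroup H] [InnerProductSpace ℝ H]
    {n : ℕ} (v : Fin n → H) :
    Matrix.PosSemidef (Matrix.of fun i j => (inner ℝ (v i) (v j) : ℝ)) := by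
  refine Matrix.posSemidef_iff_dotProduct_mulVec.mpr ⟨?_, ?_⟩
  · ext i j
    simp [Matrix.conjTranspose_apply, real_inner_comm]
  · intro x
    have : dotProduct (star x) ((Matrix.of fun i j => (inner ℝ (v i) (v j) : ℝ)) *ᵥ x) =
        (inner ℝ (∑ i, x i • v i) (∑ j, x j • v j) : ℝ) := by
      simp only [dotProduct, Matrix.mulVec, Matrix.of_apply, star_trivial]
      rw [sum_inner]
      refine Finset.sum_congr rfl fun i _ => ?_
      rw [real_inner_smul_left, inner_sum]
      exact congrArg (fun z => x i * z) (Finset.sum_congr rfl fun j _ => by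
        rw [real_inner_smul_right]; ring)
    rw [this]
    exact real_inner_self_nonneg

end Aux

/-- If a topological group `G` has a metrically proper affine isometric action on a real
Hilbert space `H` (i.e. `g ↦ ‖g·0‖` is a proper function on `G`), then
`g ↦ exp(−‖g·0‖²)` is a positive definite function on `G` vanishing at infinity. -/
theorem exp_neg_norm_sq_cocycle_positive_definite_C0
    (G : Type*) [Group G] [TopologicalSpace G]
    (H : Type*) [NormedAddCommGroup H] [InnerProductSpace ℝ H] [CompleteSpace H]
    (ρ : G →* (H ≃ᵃⁱ[ℝ] H))
    (hproper : Tendsto (fun g : G => ‖ρ g 0‖) (cocompact G) atTop) :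
    (∀ (n : ℕ) (g : Fin n → G) (c : Fin n → ℝ),
      0 ≤ ∑ i, ∑ j, c i * c j * Real.exp (-‖ρ ((g i)⁻¹ * g j) 0‖ ^ 2)) ∧
    Tendsto (fun g : G => Real.exp (-‖ρ g 0‖ ^ 2)) (cocompact G) (nhds 0) := by
  constructor
  · intro n g c
    set b : G → H := fun g => ρ g 0 with hb
    -- cocycle identity: ‖b (g⁻¹ * h)‖ = ‖b h - b g‖
    have hco : ∀ g h : G, ‖b (g⁻¹ * h)‖ = ‖b h - b g‖ := by
      intro g h
      have h1 : ρ g (b (g⁻¹ * h)) = b h := by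
        have : ρ g * ρ (g⁻¹ * h) = ρ h := by rw [← map_mul]; group
        calc ρ g (b (g⁻¹ * h)) = (ρ g * ρ (g⁻¹ * h)) 0 := rfl
          _ = ρ h 0 := by rw [this]
      calc ‖b (g⁻¹ * h)‖ = dist (b (g⁻¹ * h)) 0 := by rw [dist_zero_right]
        _ = dist (ρ g (b (g⁻¹ * h))) (ρ g 0) := ((ρ g).isometry.dist_eq _ _).symm
        _ = dist (b h) (b g) := by rw [h1]
        _ = ‖b h - b g‖ := dist_eq_norm _ _
    set v : Fin n → H := fun i => (Real.sqrt 2) • b (g i) with hv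
    set d : Fin n → ℝ := fun i => c i * Real.exp (-‖b (g i)‖ ^ 2) with hd
    have hterm : ∀ i j : Fin n,
        c i * c j * Real.exp (-‖ρ ((g i)⁻¹ * g j) 0‖ ^ 2)
          = d i * d j * Real.exp ((inner ℝ (v i) (v j) : ℝ)) := by
      intro i j
      have h2 : ‖ρ ((g i)⁻¹ * g j) 0‖ ^ 2 = ‖b (g j) - b (g i)‖ ^ 2 := by
        rw [show ρ ((g i)⁻¹ * g j) 0 = b ((g i)⁻¹ * g j) from rfl, hco]
      have h3 : ‖b (g j) - b (g i)‖ ^ 2 =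
          ‖b (g j)‖ ^ 2 - 2 * (inner ℝ (b (g i)) (b (g j)) : ℝ) + ‖b (g i)‖ ^ 2 := by
        rw [norm_sub_sq_real, real_inner_comm]
      have h4 : (inner ℝ (v i) (v j) : ℝ) = 2 * (inner ℝ (b (g i)) (b (g j)) : ℝ) := by
        simp only [hv, real_inner_smul_left, real_inner_smul_right]
        rw [← mul_assoc, Real.mul_self_sqrt (by norm_num : (0:ℝ) ≤ 2)]
      rw [h2, h3, h4, hd]
      simp only []
      rw [show -(‖b (g j)‖ ^ 2 - 2 * (inner ℝ (b (g i)) (b (g j)) : ℝ) + ‖b (g i)‖ ^ 2)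
          = (-‖b (g i)‖ ^ 2) + ((-‖b (g j)‖ ^ 2) + 2 * (inner ℝ (b (g i)) (b (g j)) : ℝ)) by ring,
        Real.exp_add, Real.exp_add]
      ring
    calc (0:ℝ) ≤ ∑ i, ∑ j, d i * d j * Real.exp ((inner ℝ (v i) (v j) : ℝ)) :=
          aux_quad_exp_nonneg (aux_gram_posSemidef v) d
      _ = ∑ i, ∑ j, c i * c j * Real.exp (-‖ρ ((g i)⁻¹ * g j) 0‖ ^ 2) := by
          refine Finset.sum_congr rfl fun i _ => Finset.sum_congr rfl fun j _ => ?_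
          rw [hterm]
  · have h1 : Tendsto (fun g : G => ‖ρ g 0‖ ^ 2) (cocompact G) atTop :=
      (tendsto_pow_atTop (by norm_num : (2:ℕ) ≠ 0)).comp hproper
    have h2 : Tendsto (fun g : G => -‖ρ g 0‖ ^ 2) (cocompact G) atBot :=
      tendsto_neg_atBot_iff.mpr h1
    exact Real.tendsto_exp_atBot.comp h2
end

section
/- Let G be a topological group acting continuously and transitively on a discrete space X, with open stabilizer K = Stab(v). If a subgroup Γ ≤ G acts transitively on X and Γ ∩ K is closed in G, then Γ is closed in G. -/
/-- Let `G` be a topological group acting continuously and transitively on a discrete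
space `X`, with open stabilizer `K = Stab(v)` (openness of `K` is equivalent to the
continuity of the orbit map `g ↦ g • v` into the discrete space `X`). If a subgroup
`Γ ≤ G` acts transitively on `X` and `Γ ∩ K` is closed in `G`, then `Γ` is closed
in `G`. -/
theorem subgroup_closed_of_transitive_discrete
    (G : Type*) [Group G] [TopologicalSpace G] [IsTopologicalGroup G]
    (X : Type*) [TopologicalSpace X] [DiscreteTopology X] [MulAction G X]
    [ContinuousSMul G X] (v : X)
    (htransG : ∀ x : X, ∃ g : G, g • v = x)
    (Γ : Subgroup G)
    (htrans : ∀ x : X, ∃ γ ∈ Γ, γ • v = x)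
    (hclosed : IsClosed ((Γ ⊓ MulAction.stabilizer G v : Subgroup G) : Set G)) :
    IsClosed (Γ : Set G) := by
  -- K := stabilizer is open
  have hK : IsOpen ((MulAction.stabilizer G v : Subgroup G) : Set G) := by
    have hc : Continuous fun g : G => g • v := continuous_id.smul continuous_const
    have : ((MulAction.stabilizer G v : Subgroup G) : Set G)
        = (fun g : G => g • v) ⁻¹' {v} := by
      ext g; simp [MulAction.mem_stabilizer_iff]
    rw [this]
    exact (isOpen_discrete _).preimage hc
  rw [← isOpen_compl_iff]
  rw [isOpen_iff_forall_mem_open]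
  intro g hg
  obtain ⟨δ, hδΓ, hδv⟩ := htrans (g • v)
  refine ⟨(fun x => δ * x) '' (((MulAction.stabilizer G v : Subgroup G) : Set G)
      \ ((Γ ⊓ MulAction.stabilizer G v : Subgroup G) : Set G)), ?_, ?_, ?_⟩
  · rintro x ⟨k, ⟨hkK, hknot⟩, rfl⟩ hx
    exact hknot ⟨by simpa using Γ.mul_mem (Γ.inv_mem hδΓ) hx, hkK⟩
  · exact (Homeomorph.mulLeft δ).isOpenMap _ (hK.sdiff hclosed)
  · refine ⟨δ⁻¹ * g, ⟨?_, ?_⟩, by group⟩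
    · show (δ⁻¹ * g) • v = v
      rw [mul_smul, ← hδv, ← mul_smul, inv_mul_cancel, one_smul]
    · intro hmem
      exact hg (by simpa using Γ.mul_mem hδΓ hmem.1)
end
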